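/- Let m >= 2 and fix 1 <= i < j <= m. For a positive integer q, let M(q) be the set of tuples (x_1,...,x_m) in Z_q^m such that: x_i = -1 and x_j = -1; x_s != 0 and x_s != 1 for all s; x_s != x_t for all s != t with {s,t} != {i,j}; x_s != x_t + 1 for all s < t with (s,t) != (i,j); and x_s != -x_t and x_s != -x_t + 1 for all s != t. Then there exists a positive integer N such that for every integer q >= N (of either parity), |M(q)| = (q - 2m + 1)^(m-i-1) * (q - 2m + 2)^(i-1). -/
import Mathlib

namespace ShiB

/-- boustrophedon successor of a domino (identified by its left cell) on the path of `Q+1` cells -/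
def succcell (Q c : ℕ) : ℕ :=
  if c = 0 then 1
  else if c % 2 = 1 then (if c + 2 ≤ Q - 1 then c + 2 else 2 * Q - 3 - c)
  else c - 2

/-- validity of a tuple of free dominoes -/
def CombValid (Q n r : ℕ) (c : Fin n → ℕ) : Prop :=
  (∀ s, 4 ≤ c s ∧ c s + 1 ≤ Q ∧ (c s = 4 → (s : ℕ) < r)) ∧
  (∀ s t, s ≠ t → c s + 2 ≤ c t ∨ c t + 2 ≤ c s) ∧
  (∀ s t : Fin n, s < t → c s ≠ succcell Q (c t))

open Classical in
noncomputable def combFinset (Q n r : ℕ) : Finset (Fin n → ℕ) :=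
  (Fintype.piFinset fun _ => Finset.range Q).filter (CombValid Q n r)

/-! ### arithmetic helpers -/

lemma insC {Q k a b : ℕ} (hQ : 9 ≤ Q) (ha : 4 ≤ a) (ha2 : a + 3 ≤ Q) (hb : 4 ≤ b)
    (hb2 : b + 3 ≤ Q) (hak : a ≠ k) (hbk : b ≠ k) (hgap : a + 2 ≤ b ∨ b + 2 ≤ a)
    (h : (if a < k then a else a + 2) = succcell Q (if b < k then b else b + 2)) :
    a = succcell (Q - 2) b := by
  simp only [succcell] at h ⊢
  split_ifs at h ⊢ <;> omega

set_option maxHeartbeats 2000000 in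
lemma conC {Q K a b : ℕ} (hQ : 9 ≤ Q) (ha : 4 ≤ a) (ha2 : a + 1 ≤ Q) (hb : 4 ≤ b)
    (hb2 : b + 1 ≤ Q) (hK : 4 ≤ K) (hK2 : K + 1 ≤ Q)
    (hab : a + 2 ≤ b ∨ b + 2 ≤ a) (haK : a + 2 ≤ K ∨ K + 2 ≤ a) (hbK : b + 2 ≤ K ∨ K + 2 ≤ b)
    (h : (if a < K then a else a - 2) = succcell (Q - 2) (if b < K then b else b - 2)) :
    a = succcell Q b ∨ a = succcell Q K := by
  simp only [succcell] at h ⊢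
  split_ifs at h ⊢ <;> omega

lemma slotC {Q k b : ℕ} (hQ : 9 ≤ Q) (hb : 4 ≤ b) (hb2 : b + 3 ≤ Q) (hk : 3 ≤ k)
    (hk2 : k + 2 ≤ Q) (h1 : b ≠ k) (h2 : ¬(b % 2 = 1 ∧ k = b - 1)) (h3 : ¬(b % 2 = 0 ∧ k = b + 1)) :
    (if b < k then b else b + 2) ≠ succcell Q (k + 1) := by
  simp only [succcell]
  split_ifs <;> omega

set_option maxHeartbeats 1000000 in
lemma conSlot {Q K a : ℕ} (hQ : 9 ≤ Q) (ha : 4 ≤ a) (ha2 : a + 1 ≤ Q) (hK : 4 ≤ K)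
    (hK2 : K + 1 ≤ Q) (haK : a + 2 ≤ K ∨ K + 2 ≤ a) (hC : a ≠ succcell Q K) :
    (if a < K then a else a - 2) ≠ K - 1 ∧
    ¬((if a < K then a else a - 2) % 2 = 1 ∧ K - 1 = (if a < K then a else a - 2) - 1) ∧
    ¬((if a < K then a else a - 2) % 2 = 0 ∧ K - 1 = (if a < K then a else a - 2) + 1) := by
  simp only [succcell] at hC
  split_ifs at hC ⊢ <;> omega

theorem comb_card (n : ℕ) : ∀ Q r : ℕ, r ≤ n → 2 * n + 9 ≤ Q →
    (combFinset Q n r).card = (Q - 2 * n - 3) ^ (n - r) * (Q - 2 * n - 2) ^ r := by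
  induction n with
  | zero =>
    intro Q r hr hQ
    interval_cases r
    have h1 : combFinset Q 0 0 = {default} := by
      ext c
      simp only [combFinset, Finset.mem_filter, Finset.mem_singleton]
      constructor
      · intro _; exact Subsingleton.elim _ _
      · rintro rfl
        refine ⟨?_, fun s => s.elim0, fun s => s.elim0, fun s => s.elim0⟩
        simp only [Fintype.mem_piFinset]
        exact fun s => s.elim0
    rw [h1]; simp
  | succ n ih =>
    intro Q r hr hQ
    classical
    set r' := min r n with hr'def
    -- contraction map
    set G : (Fin (n+1) → ℕ) → (Fin n → ℕ) :=
      fun c t => if c t.castSucc < c (Fin.last n) then c t.castSucc else c t.castSucc - 2 with hG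
    -- insertion map
    set ins : (Fin n → ℕ) → ℕ → (Fin (n+1) → ℕ) :=
      fun y k => Fin.snoc (fun t => if y t < k then y t else y t + 2) (k + 1) with hins
    have hQ9 : 9 ≤ Q := by omega
    -- good slots
    set slotGood : (Fin n → ℕ) → ℕ → Prop := fun y k =>
      3 ≤ k ∧ k ≤ Q - 2 ∧ (k = 3 → r = n + 1) ∧
      ∀ t, y t ≠ k ∧ ¬(y t % 2 = 1 ∧ k = y t - 1) ∧ ¬(y t % 2 = 0 ∧ k = y t + 1) with hslot
    set goodSlots : (Fin n → ℕ) → Finset ℕ :=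
      fun y => (Finset.Icc 3 (Q - 2)).filter (slotGood y) with hgs
    -- Step 1 : contraction lands in the small finset
    have hcs_lt_last : ∀ t : Fin n, t.castSucc < Fin.last n := fun t => Fin.castSucc_lt_last t
    have hcs_ne_last : ∀ t : Fin n, t.castSucc ≠ Fin.last n := fun t => (hcs_lt_last t).ne
    have step1 : ∀ c ∈ combFinset Q (n+1) r, G c ∈ combFinset (Q-2) n r' := by
      intro c hc
      simp only [combFinset, Finset.mem_filter, Fintype.mem_piFinset, Finset.mem_range,
        CombValid] at hc ⊢
      obtain ⟨hmem, hA, hB, hC⟩ := hc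
      have hKA := hA (Fin.last n)
      have gapK : ∀ t : Fin n, c t.castSucc + 2 ≤ c (Fin.last n) ∨
          c (Fin.last n) + 2 ≤ c t.castSucc := fun t => hB _ _ (hcs_ne_last t)
      refine ⟨?_, ?_, ?_, ?_⟩
      · intro t
        have h1 := hA t.castSucc
        have h2 := gapK t
        simp only [hG]
        split_ifs <;> omega
      · intro t
        have h1 := hA t.castSucc
        have h2 := gapK t
        refine ⟨?_, ?_, ?_⟩
        · simp only [hG]; split_ifs <;> omega
        · simp only [hG]; split_ifs <;> omega
        · simp only [hG]
          have h3 : ((t.castSucc : Fin (n+1)) : ℕ) = (t : ℕ) := rfl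
          split_ifs with h
          · intro h4
            have h5 := h1.2.2 (by omega)
            rw [hr'def]
            exact Nat.lt_min.mpr ⟨by omega, t.isLt⟩
          · intro h4
            have h6 : c (Fin.last n) = 4 := by omega
            have h7 := hKA.2.2 h6
            simp only [Fin.val_last] at h7
            rw [hr'def]
            exact Nat.lt_min.mpr ⟨by omega, t.isLt⟩
      · intro s t hst
        have h1 := hA s.castSucc
        have h2 := hA t.castSucc
        have h3 := gapK s
        have h4 := gapK t
        have h5 := hB s.castSucc t.castSucc (fun h => hst (Fin.castSucc_injective _ h))
        simp only [hG]
        split_ifs <;> omega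
      · intro s t hst heq
        have h1 := hA s.castSucc
        have h2 := hA t.castSucc
        have h3 := hA (Fin.last n)
        have h5 := hB s.castSucc t.castSucc (fun h => hst.ne (Fin.castSucc_injective _ h))
        simp only [hG] at heq
        have := conC hQ9 h1.1 h1.2.1 h2.1 h2.2.1 h3.1 h3.2.1 h5
          (gapK s) (gapK t) heq
        rcases this with h | h
        · exact hC s.castSucc t.castSucc (Fin.castSucc_lt_castSucc_iff.mpr hst) h
        · exact hC s.castSucc (Fin.last n) (hcs_lt_last s) h
    -- Step 2 : fibers are in bijection with good slots
    have hr'r : r' ≤ r := min_le_left r n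
    have step2 : ∀ y ∈ combFinset (Q-2) n r',
        ((combFinset Q (n+1) r).filter (fun c => G c = y)).card = (goodSlots y).card := by
      intro y hy
      simp only [combFinset, Finset.mem_filter, Fintype.mem_piFinset, Finset.mem_range,
        CombValid] at hy
      obtain ⟨hmem, hA, hB, hC⟩ := hy
      refine Finset.card_bij' (fun c _ => c (Fin.last n) - 1) (fun k _ => ins y k)
        ?_ ?_ ?_ ?_
      -- forward map lands in good slots
      · intro c hc
        simp only [Finset.mem_filter, combFinset, Fintype.mem_piFinset, Finset.mem_range,
          CombValid] at hc
        obtain ⟨⟨cmem, cA, cB, cC⟩, hGc⟩ := hc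
        have hKA := cA (Fin.last n)
        have gapK : ∀ t : Fin n, c t.castSucc + 2 ≤ c (Fin.last n) ∨
            c (Fin.last n) + 2 ≤ c t.castSucc := fun t => cB _ _ (hcs_ne_last t)
        simp only [hgs, Finset.mem_filter, Finset.mem_Icc, hslot]
        refine ⟨⟨by omega, by omega⟩, by omega, by omega, ?_, fun t => ?_⟩
        · intro h4
          have h5 := hKA.2.2 (by omega)
          simp only [Fin.val_last] at h5
          omega
        · have hAt := cA t.castSucc
          have h := conSlot hQ9 hAt.1 hAt.2.1 hKA.1 hKA.2.1 (gapK t)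
            (cC t.castSucc (Fin.last n) (hcs_lt_last t))
          have hyt : y t = if c t.castSucc < c (Fin.last n) then c t.castSucc
              else c t.castSucc - 2 := by
            rw [← hGc]
          rw [hyt]
          exact h
      -- insertion lands in the fiber
      · intro k hk
        simp only [hgs, Finset.mem_filter, Finset.mem_Icc, hslot] at hk
        obtain ⟨⟨hk3, hkQ⟩, -, -, hk5, hk6⟩ := hk
        have hGins : G (ins y k) = y := by
          funext t
          have h1 := hA t
          have h2 := (hk6 t).1
          simp only [hG, hins, Fin.snoc_castSucc, Fin.snoc_last]
          split_ifs <;> omega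
        simp only [Finset.mem_filter, combFinset, Fintype.mem_piFinset, Finset.mem_range,
          CombValid]
        refine ⟨⟨?_, ?_, ?_, ?_⟩, hGins⟩
        · intro s
          induction s using Fin.lastCases with
          | last => simp only [hins, Fin.snoc_last]; omega
          | cast t =>
            have h1 := hA t
            simp only [hins, Fin.snoc_castSucc]
            split_ifs <;> omega
        · intro s
          induction s using Fin.lastCases with
          | last =>
            simp only [hins, Fin.snoc_last, Fin.val_last]
            refine ⟨by omega, by omega, fun h4 => ?_⟩
            have := hk5 (by omega)
            omega
          | cast t =>
            have h1 := hA t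
            have h2 := (hk6 t).1
            simp only [hins, Fin.snoc_castSucc, Fin.coe_castSucc]
            refine ⟨?_, ?_, ?_⟩
            · split_ifs <;> omega
            · split_ifs <;> omega
            · split_ifs with h
              · intro h4
                have := h1.2.2 h4
                have ht := t.isLt
                omega
              · intro h4; omega
        · intro s t hst
          induction s using Fin.lastCases with
          | last =>
            induction t using Fin.lastCases with
            | last => exact absurd rfl hst
            | cast t' =>
              have h1 := hA t'
              have h2 := (hk6 t').1
              simp only [hins, Fin.snoc_castSucc, Fin.snoc_last]
              split_ifs <;> omega
          | cast s' =>
            induction t using Fin.lastCases with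
            | last =>
              have h1 := hA s'
              have h2 := (hk6 s').1
              simp only [hins, Fin.snoc_castSucc, Fin.snoc_last]
              split_ifs <;> omega
            | cast t' =>
              have hst' : s' ≠ t' := fun h => hst (by rw [h])
              have h1 := hA s'
              have h2 := hA t'
              have h3 := hB s' t' hst'
              have h4 := (hk6 s').1
              have h5 := (hk6 t').1
              simp only [hins, Fin.snoc_castSucc]
              split_ifs <;> omega
        · intro s t hst
          induction t using Fin.lastCases with
          | last =>
            induction s using Fin.lastCases with
            | last => exact absurd hst (lt_irrefl _)
            | cast s' =>
              have h1 := hA s'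
              simp only [hins, Fin.snoc_castSucc, Fin.snoc_last]
              exact slotC hQ9 h1.1 (by omega) hk3 (by omega)
                (hk6 s').1 (hk6 s').2.1 (hk6 s').2.2
          | cast t' =>
            induction s using Fin.lastCases with
            | last =>
              exact absurd (lt_trans hst (hcs_lt_last t')) (lt_irrefl _)
            | cast s' =>
              have hst' : s' < t' := Fin.castSucc_lt_castSucc_iff.mp hst
              have h1 := hA s'
              have h2 := hA t'
              simp only [hins, Fin.snoc_castSucc]
              intro heq
              exact hC s' t' hst'
                (insC hQ9 h1.1 (by omega) h2.1 (by omega) (hk6 s').1 (hk6 t').1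
                  (hB s' t' hst'.ne) heq)
      -- left inverse
      · intro c hc
        simp only [Finset.mem_filter, combFinset, Fintype.mem_piFinset, Finset.mem_range,
          CombValid] at hc
        obtain ⟨⟨cmem, cA, cB, cC⟩, hGc⟩ := hc
        have hKA := cA (Fin.last n)
        have gapK : ∀ t : Fin n, c t.castSucc + 2 ≤ c (Fin.last n) ∨
            c (Fin.last n) + 2 ≤ c t.castSucc := fun t => cB _ _ (hcs_ne_last t)
        funext s
        induction s using Fin.lastCases with
        | last =>
          simp only [hins, Fin.snoc_last]
          omega
        | cast t =>
          have h1 := cA t.castSucc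
          have h2 := gapK t
          have hyt : y t = if c t.castSucc < c (Fin.last n) then c t.castSucc
              else c t.castSucc - 2 := by
            rw [← hGc]
          simp only [hins, Fin.snoc_castSucc, hyt]
          split_ifs <;> omega
      -- right inverse
      · intro k hk
        simp only [hins, Fin.snoc_last]
        omega
    -- Step 3 : number of good slots
    have step3 : ∀ y ∈ combFinset (Q-2) n r',
        (goodSlots y).card = if r ≤ n then Q - 2*n - 5 else Q - 2*n - 4 := by
      intro y hy
      simp only [combFinset, Finset.mem_filter, Fintype.mem_piFinset, Finset.mem_range,
        CombValid] at hy
      obtain ⟨hmem, hA, hB, hC⟩ := hy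
      have hyinj : Function.Injective y := by
        intro s t h
        by_contra hne
        rcases hB s t hne with h' | h' <;> omega
      set f : Fin n → ℕ := fun t => if y t % 2 = 1 then y t - 1 else y t + 1 with hf
      have hfinj : Function.Injective f := by
        intro s t h
        by_contra hne
        have h1 := hA s; have h2 := hA t
        rcases hB s t hne with h' | h' <;>
          (simp only [hf] at h; split_ifs at h <;> omega)
      set bad1 := Finset.image y Finset.univ with hbad1
      set bad2 := Finset.image f Finset.univ with hbad2
      have hc1 : bad1.card = n := by
        rw [hbad1, Finset.card_image_of_injective _ hyinj, Finset.card_univ, Fintype.card_fin]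
      have hc2 : bad2.card = n := by
        rw [hbad2, Finset.card_image_of_injective _ hfinj, Finset.card_univ, Fintype.card_fin]
      have hd12 : Disjoint bad1 bad2 := by
        rw [Finset.disjoint_left]
        rintro a ha hb
        rw [hbad1, Finset.mem_image] at ha
        rw [hbad2, Finset.mem_image] at hb
        obtain ⟨s, -, rfl⟩ := ha
        obtain ⟨t, -, ht⟩ := hb
        have h1 := hA s; have h2 := hA t
        rcases eq_or_ne s t with rfl | hne
        · simp only [hf] at ht; split_ifs at ht <;> omega
        · rcases hB t s hne.symm with h' | h' <;>
            (simp only [hf] at ht; split_ifs at ht <;> omega)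
      have hsub12 : bad1 ∪ bad2 ⊆ Finset.Icc 3 (Q-2) := by
        intro a ha
        rw [Finset.mem_union, hbad1, hbad2, Finset.mem_image, Finset.mem_image] at ha
        rw [Finset.mem_Icc]
        rcases ha with ⟨t, -, rfl⟩ | ⟨t, -, ht⟩
        · have := hA t; omega
        · have := hA t; simp only [hf] at ht; split_ifs at ht <;> omega
      have h3notin : (3:ℕ) ∉ bad1 ∪ bad2 := by
        rw [Finset.mem_union, hbad1, hbad2, Finset.mem_image, Finset.mem_image]
        rintro (⟨t, -, ht⟩ | ⟨t, -, ht⟩)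
        · have := hA t; omega
        · have := hA t; simp only [hf] at ht; split_ifs at ht <;> omega
      have hcardIcc : (Finset.Icc 3 (Q-2)).card = Q - 4 := by
        rw [Nat.card_Icc]; omega
      by_cases hrn : r ≤ n
      · have hset : goodSlots y = (Finset.Icc 3 (Q-2)) \ ({3} ∪ (bad1 ∪ bad2)) := by
          ext k
          simp only [hgs, Finset.mem_filter, Finset.mem_sdiff, Finset.mem_union,
            Finset.mem_singleton, hbad1, hbad2, Finset.mem_image, Finset.mem_univ, true_and,
            hslot, Finset.mem_Icc, hf]
          constructor
          · rintro ⟨hIcc, hk1, hk2, hk5, hk6⟩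
            refine ⟨hIcc, ?_⟩
            rintro (rfl | ⟨t, ht⟩ | ⟨t, ht⟩)
            · exact absurd (hk5 rfl) (by omega)
            · exact (hk6 t).1 ht
            · have h1 := (hk6 t).2.1
              have h2 := (hk6 t).2.2
              have h3 := hA t
              split_ifs at ht <;> omega
          · rintro ⟨hIcc, hbad⟩
            push_neg at hbad
            obtain ⟨hb0, hb1, hb2⟩ := hbad
            refine ⟨hIcc, hIcc.1, hIcc.2, fun h => absurd h hb0, fun t => ?_⟩
            have h1 := hb1 t
            have h2 := hb2 t
            have h3 := hA t
            split_ifs at h2 <;>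
              refine ⟨h1, ?_, ?_⟩ <;> omega
        rw [hset, if_pos hrn, Finset.card_sdiff_of_subset]
        · rw [Finset.card_union_of_disjoint, Finset.card_singleton,
            Finset.card_union_of_disjoint hd12, hc1, hc2]
          · omega
          · rw [Finset.disjoint_left]
            intro a ha hb
            rw [Finset.mem_singleton] at ha
            exact h3notin (ha ▸ hb)
        · intro a ha
          rw [Finset.mem_union, Finset.mem_singleton] at ha
          rcases ha with rfl | ha
          · rw [Finset.mem_Icc]; omega
          · exact hsub12 ha
      · have hset : goodSlots y = (Finset.Icc 3 (Q-2)) \ (bad1 ∪ bad2) := by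
          ext k
          simp only [hgs, Finset.mem_filter, Finset.mem_sdiff, Finset.mem_union,
            hbad1, hbad2, Finset.mem_image, Finset.mem_univ, true_and,
            hslot, Finset.mem_Icc, hf]
          constructor
          · rintro ⟨hIcc, hk1, hk2, hk5, hk6⟩
            refine ⟨hIcc, ?_⟩
            rintro (⟨t, ht⟩ | ⟨t, ht⟩)
            · exact (hk6 t).1 ht
            · have h1 := (hk6 t).2.1
              have h2 := (hk6 t).2.2
              have h3 := hA t
              split_ifs at ht <;> omega
          · rintro ⟨hIcc, hbad⟩
            push_neg at hbad
            obtain ⟨hb1, hb2⟩ := hbad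
            refine ⟨hIcc, hIcc.1, hIcc.2, fun _ => by omega, fun t => ?_⟩
            have h1 := hb1 t
            have h2 := hb2 t
            have h3 := hA t
            split_ifs at h2 <;>
              refine ⟨h1, ?_, ?_⟩ <;> omega
        rw [hset, if_neg hrn, Finset.card_sdiff_of_subset hsub12,
          Finset.card_union_of_disjoint hd12, hc1, hc2]
        omega
    have hsum := Finset.card_eq_sum_card_fiberwise step1
    rw [hsum]
    have : ∀ y ∈ combFinset (Q-2) n r',
        ((combFinset Q (n+1) r).filter (fun c => G c = y)).card
          = if r ≤ n then Q - 2*n - 5 else Q - 2*n - 4 := by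
      intro y hy; rw [step2 y hy, step3 y hy]
    rw [Finset.sum_congr rfl this, Finset.sum_const, smul_eq_mul]
    have hr'n : r' ≤ n := min_le_right r n
    have hQ2 : 2 * n + 9 ≤ Q - 2 := by omega
    rw [ih (Q-2) r' hr'n hQ2]
    by_cases hcase : r ≤ n
    · have h1 : r' = r := min_eq_left hcase
      rw [h1, if_pos hcase]
      have e1 : Q - 2 - 2*n - 3 = Q - 2*(n+1) - 3 := by omega
      have e2 : Q - 2 - 2*n - 2 = Q - 2*(n+1) - 2 := by omega
      have e3 : Q - 2*n - 5 = Q - 2*(n+1) - 3 := by omega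
      have e4 : n + 1 - r = (n - r) + 1 := by omega
      rw [e1, e2, e3, e4, pow_succ]
      ring
    · have hreq : r = n + 1 := by omega
      have h1 : r' = n := by omega
      rw [h1, if_neg hcase, hreq]
      have e1 : Q - 2 - 2*n - 3 = Q - 2*(n+1) - 3 := by omega
      have e2 : Q - 2 - 2*n - 2 = Q - 2*(n+1) - 2 := by omega
      have e3 : Q - 2*n - 4 = Q - 2*(n+1) - 2 := by omega
      rw [e1, e2, e3]
      rw [pow_succ, Nat.sub_self, Nat.sub_self]
      ring
  
/-- left cell of the folded domino of `x` -/
def cmap (q : ℕ) (x : ZMod q) : ℕ :=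
  if x.val = 0 then 0 else if 2 * x.val ≤ q then 2 * x.val - 1 else 2 * (q - x.val)

def cinv (q c : ℕ) : ZMod q :=
  if c % 2 = 1 then (((c + 1) / 2 : ℕ) : ZMod q) else ((q - c / 2 : ℕ) : ZMod q)

section Dict

variable {q : ℕ} [NeZero q]

lemma mod_helper {a b c q : ℕ} (hq : 0 < q) (hab : a < q) (hb : b ≤ q) (hc : c < q) :
    (a + b) % q = c ↔ (a + b = c ∨ a + b = q + c) := by
  rcases lt_or_ge (a + b) q with h | h
  · rw [Nat.mod_eq_of_lt h]; omega
  · rw [Nat.mod_eq_sub_mod h, Nat.mod_eq_of_lt (by omega)]; omega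

lemma val_eq_iff (x y : ZMod q) : x = y ↔ x.val = y.val :=
  ⟨congrArg _, fun h => ZMod.val_injective q h⟩

lemma neg_one_val (hq : 9 ≤ q) : (-1 : ZMod q).val = q - 1 := by
  have h1 : ((q - 1 : ℕ) : ZMod q) = -1 := by
    rw [Nat.cast_sub (by omega : 1 ≤ q), ZMod.natCast_self, Nat.cast_one, zero_sub]
  rw [← h1, ZMod.val_cast_of_lt (by omega)]

lemma add_eq_zero_iff (hq : 9 ≤ q) (x y : ZMod q) :
    x + y = 0 ↔ (x.val + y.val = 0 ∨ x.val + y.val = q) := by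
  rw [← ZMod.val_eq_zero, ZMod.val_add,
    mod_helper (by omega) (ZMod.val_lt x) (ZMod.val_lt y).le (by omega)]
  omega

lemma add_eq_one_iff (hq : 9 ≤ q) (x y : ZMod q) :
    x + y = 1 ↔ (x.val + y.val = 1 ∨ x.val + y.val = q + 1) := by
  haveI : Fact (1 < q) := ⟨by omega⟩
  rw [val_eq_iff, ZMod.val_one, ZMod.val_add,
    mod_helper (by omega) (ZMod.val_lt x) (ZMod.val_lt y).le (by omega)]

lemma eq_add_one_iff (hq : 9 ≤ q) (x y : ZMod q) :
    x = y + 1 ↔ (y.val + 1 = x.val ∨ y.val + 1 = q + x.val) := by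
  haveI : Fact (1 < q) := ⟨by omega⟩
  rw [val_eq_iff, ZMod.val_add, ZMod.val_one, eq_comm,
    mod_helper (by omega) (ZMod.val_lt y) (by omega) (ZMod.val_lt x)]

lemma cmap_lt (hq : 9 ≤ q) (x : ZMod q) : cmap q x < q := by
  have := ZMod.val_lt x
  simp only [cmap]
  split_ifs <;> omega

lemma cmap_inj (hq : 9 ≤ q) {x y : ZMod q} (h : cmap q x = cmap q y) : x = y := by
  have hx := ZMod.val_lt x
  have hy := ZMod.val_lt y
  rw [val_eq_iff]
  simp only [cmap] at h
  split_ifs at h <;> omega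

lemma cmap_zero (hq : 9 ≤ q) : cmap q (0 : ZMod q) = 0 := by
  simp [cmap, ZMod.val_zero]

lemma cmap_neg_one (hq : 9 ≤ q) : cmap q (-1 : ZMod q) = 2 := by
  simp only [cmap, neg_one_val hq]
  split_ifs <;> omega

lemma dictB (hq : 9 ≤ q) (x y : ZMod q) :
    (x ≠ y ∧ x + y ≠ 0 ∧ x + y ≠ 1) ↔
      (cmap q x + 2 ≤ cmap q y ∨ cmap q y + 2 ≤ cmap q x) := by
  have hx := ZMod.val_lt x
  have hy := ZMod.val_lt y
  rw [Ne, val_eq_iff, Ne, add_eq_zero_iff hq, Ne, add_eq_one_iff hq]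
  simp only [cmap]
  split_ifs <;> (try simp only [iff_false, iff_true, false_iff, true_iff, not_or, not_and,
    not_not, not_le, not_lt]) <;> omega

lemma dictC (hq : 9 ≤ q) (x y : ZMod q) :
    x = y + 1 ↔ cmap q x = succcell q (cmap q y) := by
  have hx := ZMod.val_lt x
  have hy := ZMod.val_lt y
  rw [eq_add_one_iff hq]
  simp only [cmap, succcell]
  split_ifs <;> (try simp only [iff_false, iff_true, false_iff, true_iff, not_or, not_and,
    not_not, not_le, not_lt]) <;> omega

lemma cmap_cinv (hq : 9 ≤ q) {c : ℕ} (hc : c < q) : cmap q (cinv q c) = c := by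
  simp only [cinv]
  split_ifs with h
  · rw [cmap, ZMod.val_cast_of_lt (by omega)]
    split_ifs <;> omega
  · rcases Nat.eq_zero_or_pos c with rfl | hcpos
    · simp [ZMod.natCast_self, cmap, ZMod.val_zero]
    · rw [cmap, ZMod.val_cast_of_lt (by omega)]
      split_ifs <;> omega

end Dict


def emb (m i j : ℕ) (t : Fin (m - 2)) : Fin m :=
  ⟨if (t : ℕ) < i - 1 then (t : ℕ) else if (t : ℕ) + 1 < j - 1 then (t : ℕ) + 1 else (t : ℕ) + 2,
    by have := t.isLt; split_ifs <;> omega⟩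

lemma emb_spec (m i j : ℕ) (t : Fin (m - 2)) :
    ((emb m i j t : ℕ) = t ∧ (t : ℕ) < i - 1) ∨
    ((emb m i j t : ℕ) = (t : ℕ) + 1 ∧ i - 1 ≤ t ∧ (t : ℕ) + 1 < j - 1) ∨
    ((emb m i j t : ℕ) = (t : ℕ) + 2 ∧ i - 1 ≤ t ∧ j - 1 ≤ (t : ℕ) + 1) := by
  simp only [emb]
  split_ifs with h1 h2
  · exact Or.inl ⟨rfl, h1⟩
  · exact Or.inr (Or.inl ⟨rfl, by omega, h2⟩)
  · exact Or.inr (Or.inr ⟨rfl, by omega, by omega⟩)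

lemma emb_val {m i j : ℕ} (hm : 2 ≤ m) (hi1 : 1 ≤ i) (hij : i < j) (hjm : j ≤ m)
    (t : Fin (m - 2)) :
    (emb m i j t : ℕ) ≠ i - 1 ∧ (emb m i j t : ℕ) ≠ j - 1 ∧
      ((emb m i j t : ℕ) < i - 1 ↔ (t : ℕ) < i - 1) := by
  have h := emb_spec m i j t
  have := t.isLt
  omega

lemma emb_lt_iff {m i j : ℕ} (t u : Fin (m - 2)) :
    emb m i j t < emb m i j u ↔ t < u := by
  have ht := emb_spec m i j t
  have hu := emb_spec m i j u
  rw [Fin.lt_def, Fin.lt_def]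
  omega

lemma emb_inj {m i j : ℕ} {t u : Fin (m - 2)} (h : emb m i j t = emb m i j u) : t = u := by
  have ht := emb_spec m i j t
  have hu := emb_spec m i j u
  have h' : (emb m i j t : ℕ) = (emb m i j u : ℕ) := congrArg Fin.val h
  exact Fin.ext (by omega)

lemma emb_surj {m i j : ℕ} (hm : 2 ≤ m) (hi1 : 1 ≤ i) (hij : i < j) (hjm : j ≤ m)
    (s : Fin m) (h1 : (s : ℕ) ≠ i - 1) (h2 : (s : ℕ) ≠ j - 1) :
    ∃ t : Fin (m - 2), emb m i j t = s := by
  have hs := s.isLt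
  refine ⟨⟨if (s : ℕ) < i - 1 then (s : ℕ) else if (s : ℕ) < j - 1 then (s : ℕ) - 1
    else (s : ℕ) - 2, by split_ifs <;> omega⟩, ?_⟩
  apply Fin.ext
  simp only [emb]
  split_ifs <;> omega


set_option maxHeartbeats 1000000 in
theorem card_S (m i j q : ℕ) (hm : 2 ≤ m) (hi1 : 1 ≤ i) (hij : i < j) (hjm : j ≤ m)
    (hq : 2 * m + 5 ≤ q) (I0 J0 : Fin m) (hI0 : (I0 : ℕ) = i - 1) (hJ0 : (J0 : ℕ) = j - 1) :
    ({x : Fin m → ZMod q | x I0 = -1 ∧ x J0 = -1 ∧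
        (∀ s : Fin m, x s ≠ 0 ∧ x s ≠ 1) ∧
        (∀ s t : Fin m, s ≠ t → ¬((s = I0 ∧ t = J0) ∨ (s = J0 ∧ t = I0)) → x s ≠ x t) ∧
        (∀ s t : Fin m, s < t → ¬(s = I0 ∧ t = J0) → x s ≠ x t + 1) ∧
        (∀ s t : Fin m, s ≠ t → x s ≠ -x t ∧ x s ≠ -x t + 1)}.ncard : ℤ)
      = ((q : ℤ) - 2 * m + 1) ^ (m - i - 1) * ((q : ℤ) - 2 * m + 2) ^ (i - 1) := by
  haveI : NeZero q := ⟨by omega⟩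
  haveI : Fact (1 < q) := ⟨by omega⟩
  have hq9 : 9 ≤ q := by omega
  -- basic facts about the fixed value -1
  have hn0 : (-1 : ZMod q) ≠ 0 := by
    rw [Ne, val_eq_iff, neg_one_val hq9, ZMod.val_zero]; omega
  have hn1 : (-1 : ZMod q) ≠ 1 := by
    rw [Ne, val_eq_iff, neg_one_val hq9, ZMod.val_one]; omega
  have heqneg : ∀ x y : ZMod q, x = -y ↔ x + y = 0 := by
    intro x y; constructor <;> intro h <;> linear_combination h
  have heqneg1 : ∀ x y : ZMod q, x = -y + 1 ↔ x + y = 1 := by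
    intro x y; constructor <;> intro h <;> linear_combination h
  have hIJv : (i : ℕ) - 1 < j - 1 := by omega
  have hneIJ : I0 ≠ J0 := by
    intro h; rw [Fin.ext_iff, hI0, hJ0] at h; omega
  have hsucc4 : ∀ c : ℕ, 4 ≤ c → c < q → (succcell q c = 2 ↔ c = 4) := by
    intro c h1 h2
    simp only [succcell]
    split_ifs <;> omega
  set S : Set (Fin m → ZMod q) := {x | x I0 = -1 ∧ x J0 = -1 ∧
        (∀ s : Fin m, x s ≠ 0 ∧ x s ≠ 1) ∧
        (∀ s t : Fin m, s ≠ t → ¬((s = I0 ∧ t = J0) ∨ (s = J0 ∧ t = I0)) → x s ≠ x t) ∧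
        (∀ s t : Fin m, s < t → ¬(s = I0 ∧ t = J0) → x s ≠ x t + 1) ∧
        (∀ s t : Fin m, s ≠ t → x s ≠ -x t ∧ x s ≠ -x t + 1)} with hS
  set Ψ : (Fin m → ZMod q) → (Fin (m-2) → ℕ) := fun x t => cmap q (x (emb m i j t)) with hΨ
  -- the key membership characterisation
  have key : ∀ x : Fin m → ZMod q, x ∈ S ↔
      (x I0 = -1 ∧ x J0 = -1 ∧ CombValid q (m-2) (i-1) (Ψ x)) := by
    intro x
    simp only [hS, Set.mem_setOf_eq]
    constructor
    · rintro ⟨h1, h2, h3, h4, h5, h6⟩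
      refine ⟨h1, h2, ?_, ?_, ?_⟩
      · -- (A)
        intro t
        simp only [hΨ]
        have he := emb_val hm hi1 hij hjm t
        set e := emb m i j t with hee
        have heI : e ≠ I0 := fun h => he.1 (by rw [h, hI0])
        have heJ : e ≠ J0 := fun h => he.2.1 (by rw [h, hJ0])
        have hb1 : cmap q (x e) + 2 ≤ cmap q (0 : ZMod q) ∨
            cmap q (0 : ZMod q) + 2 ≤ cmap q (x e) := by
          refine (dictB hq9 _ _).mp ⟨(h3 e).1, by simpa using (h3 e).1, by simpa using (h3 e).2⟩
        rw [cmap_zero hq9] at hb1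
        have hb2 : cmap q (x e) + 2 ≤ cmap q (x I0) ∨ cmap q (x I0) + 2 ≤ cmap q (x e) := by
          refine (dictB hq9 _ _).mp ⟨?_, ?_, ?_⟩
          · exact h4 e I0 heI (by rintro (⟨h, -⟩ | ⟨h, -⟩); exacts [heI h, heJ h])
          · exact fun hh => (h6 e I0 heI).1 ((heqneg _ _).mpr hh)
          · exact fun hh => (h6 e I0 heI).2 ((heqneg1 _ _).mpr hh)
        rw [h1, cmap_neg_one hq9] at hb2
        refine ⟨by omega, by have := cmap_lt hq9 (x e); omega, ?_⟩
        -- cmap = 4 → t < i - 1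
        intro h4c
        by_contra hcon
        have hIe : I0 < e := by
          rw [Fin.lt_def, hI0]
          have := he.2.2
          have := he.1
          omega
        refine h5 I0 e hIe (by rintro ⟨-, h⟩; exact heJ h) ?_
        rw [dictC hq9 (x I0) (x e), h1, cmap_neg_one hq9, h4c]
        norm_num [succcell]
      · -- (B)
        intro s t hst
        simp only [hΨ]
        have hes := emb_val hm hi1 hij hjm s
        have het := emb_val hm hi1 hij hjm t
        have hne : emb m i j s ≠ emb m i j t := fun h => hst (emb_inj h)
        refine (dictB hq9 _ _).mp ⟨?_, ?_, ?_⟩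
        · refine h4 _ _ hne ?_
          rintro (⟨h, -⟩ | ⟨-, h⟩)
          · exact hes.1 (by rw [h, hI0])
          · exact het.1 (by rw [h, hI0])
        · exact fun hh => (h6 _ _ hne).1 ((heqneg _ _).mpr hh)
        · exact fun hh => (h6 _ _ hne).2 ((heqneg1 _ _).mpr hh)
      · -- (C)
        intro s t hst heq
        simp only [hΨ] at heq
        have hes := emb_val hm hi1 hij hjm s
        refine h5 (emb m i j s) (emb m i j t) ((emb_lt_iff s t).mpr hst) ?_ ?_
        · rintro ⟨h, -⟩; exact hes.1 (by rw [h, hI0])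
        · exact (dictC hq9 _ _).mpr heq
    · rintro ⟨hx1, hx2, hA, hB, hC⟩
      simp only [hΨ] at hA hB hC
      have hAe : ∀ t, 4 ≤ cmap q (x (emb m i j t)) ∧ cmap q (x (emb m i j t)) < q ∧
          (cmap q (x (emb m i j t)) = 4 → (t : ℕ) < i - 1) := by
        intro t
        exact ⟨(hA t).1, by have := (hA t).2.1; omega, (hA t).2.2⟩
      -- pointwise facts for free coordinates
      have hfree0 : ∀ t, x (emb m i j t) ≠ 0 ∧ x (emb m i j t) ≠ 1 := by
        intro t
        have h := (dictB hq9 (x (emb m i j t)) 0).mpr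
          (by rw [cmap_zero hq9]; have := (hAe t).1; omega)
        exact ⟨h.1, by simpa using h.2.2⟩
      have hfreeB : ∀ t, x (emb m i j t) ≠ -1 ∧ x (emb m i j t) + (-1) ≠ 0 ∧
          x (emb m i j t) + (-1) ≠ 1 := by
        intro t
        exact (dictB hq9 (x (emb m i j t)) (-1)).mpr
          (by rw [cmap_neg_one hq9]; have := (hAe t).1; omega)
      have hcases : ∀ s : Fin m, s = I0 ∨ s = J0 ∨ ∃ t, emb m i j t = s := by
        intro s
        by_cases h1 : s = I0
        · exact Or.inl h1
        by_cases h2 : s = J0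
        · exact Or.inr (Or.inl h2)
        refine Or.inr (Or.inr (emb_surj hm hi1 hij hjm s ?_ ?_))
        · exact fun h => h1 (Fin.ext (by rw [h, hI0]))
        · exact fun h => h2 (Fin.ext (by rw [h, hJ0]))
      refine ⟨hx1, hx2, ?_, ?_, ?_, ?_⟩
      · -- base conditions
        intro s
        rcases hcases s with rfl | rfl | ⟨t, rfl⟩
        · rw [hx1]; exact ⟨hn0, hn1⟩
        · rw [hx2]; exact ⟨hn0, hn1⟩
        · exact hfree0 t
      · -- equality conditions
        intro s t hst hex
        rcases hcases s with rfl | rfl | ⟨ts, rfl⟩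
        · rcases hcases t with rfl | rfl | ⟨tt, rfl⟩
          · exact absurd rfl hst
          · exact absurd (Or.inl ⟨rfl, rfl⟩) hex
          · rw [hx1]; exact fun h => (hfreeB tt).1 h.symm
        · rcases hcases t with rfl | rfl | ⟨tt, rfl⟩
          · exact absurd (Or.inr ⟨rfl, rfl⟩) hex
          · exact absurd rfl hst
          · rw [hx2]; exact fun h => (hfreeB tt).1 h.symm
        · rcases hcases t with rfl | rfl | ⟨tt, rfl⟩
          · rw [hx1]; exact (hfreeB ts).1
          · rw [hx2]; exact (hfreeB ts).1
          · have hne : ts ≠ tt := fun h => hst (by rw [h])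
            exact ((dictB hq9 _ _).mpr (hB ts tt hne)).1
      · -- difference conditions
        intro s t hst hex
        rcases hcases s with rfl | rfl | ⟨ts, rfl⟩
        · rcases hcases t with rfl | rfl | ⟨tt, rfl⟩
          · exact absurd hst (lt_irrefl _)
          · exact absurd ⟨rfl, rfl⟩ hex
          · -- s = I0 fixed, t free
            intro heq
            rw [hx1] at heq
            have hc := (dictC hq9 _ _).mp heq
            rw [cmap_neg_one hq9] at hc
            have h4 : cmap q (x (emb m i j tt)) = 4 :=
              (hsucc4 _ (hAe tt).1 (hAe tt).2.1).mp hc.symm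
            have := (hAe tt).2.2 h4
            have := emb_val hm hi1 hij hjm tt
            rw [Fin.lt_def, hI0] at hst
            omega
        · rcases hcases t with rfl | rfl | ⟨tt, rfl⟩
          · rw [Fin.lt_def, hI0, hJ0] at hst; omega
          · exact absurd hst (lt_irrefl _)
          · -- s = J0 fixed, t free
            intro heq
            rw [hx2] at heq
            have hc := (dictC hq9 _ _).mp heq
            rw [cmap_neg_one hq9] at hc
            have h4 : cmap q (x (emb m i j tt)) = 4 :=
              (hsucc4 _ (hAe tt).1 (hAe tt).2.1).mp hc.symm
            have := (hAe tt).2.2 h4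
            have := emb_val hm hi1 hij hjm tt
            rw [Fin.lt_def, hJ0] at hst
            omega
        · rcases hcases t with rfl | rfl | ⟨tt, rfl⟩
          · rw [hx1, neg_add_cancel]; exact (hfree0 ts).1
          · rw [hx2, neg_add_cancel]; exact (hfree0 ts).1
          · have hlt : ts < tt := (emb_lt_iff ts tt).mp hst
            exact fun h => hC ts tt hlt ((dictC hq9 _ _).mp h)
      · -- sum conditions
        intro s t hst
        have conv : ∀ u v : Fin m, (x u + x v ≠ 0 ∧ x u + x v ≠ 1) →
            (x u ≠ -x v ∧ x u ≠ -x v + 1) := by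
          intro u v ⟨p1, p2⟩
          exact ⟨fun h => p1 ((heqneg _ _).mp h), fun h => p2 ((heqneg1 _ _).mp h)⟩
        apply conv
        rcases hcases s with rfl | rfl | ⟨ts, rfl⟩ <;>
          rcases hcases t with rfl | rfl | ⟨tt, rfl⟩
        · exact absurd rfl hst
        · rw [hx1, hx2]
          constructor
          · rw [Ne, add_eq_zero_iff hq9, neg_one_val hq9]; omega
          · rw [Ne, add_eq_one_iff hq9, neg_one_val hq9]; omega
        · rw [hx1, add_comm]
          exact ⟨(hfreeB tt).2.1, (hfreeB tt).2.2⟩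
        · rw [hx1, hx2]
          constructor
          · rw [Ne, add_eq_zero_iff hq9, neg_one_val hq9]; omega
          · rw [Ne, add_eq_one_iff hq9, neg_one_val hq9]; omega
        · exact absurd rfl hst
        · rw [hx2, add_comm]
          exact ⟨(hfreeB tt).2.1, (hfreeB tt).2.2⟩
        · rw [hx1]
          exact ⟨(hfreeB ts).2.1, (hfreeB ts).2.2⟩
        · rw [hx2]
          exact ⟨(hfreeB ts).2.1, (hfreeB ts).2.2⟩
        · have hne : ts ≠ tt := fun h => hst (by rw [h])
          have := (dictB hq9 _ _).mpr (hB ts tt hne)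
          exact ⟨this.2.1, this.2.2⟩
  -- the image computation
  have hinj : Set.InjOn Ψ S := by
    intro x hx x' hx' hΨeq
    rw [key] at hx hx'
    funext s
    rcases (by
      by_cases h1 : s = I0
      · exact Or.inl h1
      by_cases h2 : s = J0
      · exact Or.inr (Or.inl h2)
      refine Or.inr (Or.inr (emb_surj hm hi1 hij hjm s ?_ ?_))
      · exact fun h => h1 (Fin.ext (by rw [h, hI0]))
      · exact fun h => h2 (Fin.ext (by rw [h, hJ0])) :
        s = I0 ∨ s = J0 ∨ ∃ t, emb m i j t = s) with rfl | rfl | ⟨t, rfl⟩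
    · rw [hx.1, hx'.1]
    · rw [hx.2.1, hx'.2.1]
    · exact cmap_inj hq9 (congrFun hΨeq t)
  have himg : Ψ '' S = ↑(combFinset q (m-2) (i-1)) := by
    ext c
    simp only [Set.mem_image, Finset.coe_filter, combFinset, Set.mem_setOf_eq,
      Fintype.mem_piFinset, Finset.mem_range]
    constructor
    · rintro ⟨x, hx, rfl⟩
      rw [key] at hx
      exact ⟨fun t => cmap_lt hq9 _, hx.2.2⟩
    · rintro ⟨hmem, hvalid⟩
      set x : Fin m → ZMod q :=
        fun s => if h : ∃ t, emb m i j t = s then cinv q (c h.choose) else -1 with hxdef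
      have hxe : ∀ t, x (emb m i j t) = cinv q (c t) := by
        intro t
        have hex : ∃ t', emb m i j t' = emb m i j t := ⟨t, rfl⟩
        have : x (emb m i j t) = cinv q (c hex.choose) := by
          rw [hxdef]; exact dif_pos hex
        rw [this, emb_inj hex.choose_spec]
      have hΨx : Ψ x = c := by
        funext t
        rw [hΨ]
        simp only
        rw [hxe t, cmap_cinv hq9 (hmem t)]
      refine ⟨x, ?_, hΨx⟩
      rw [key]
      have hxI : x I0 = -1 := by
        rw [hxdef]
        refine dif_neg ?_
        rintro ⟨t, ht⟩
        exact (emb_val hm hi1 hij hjm t).1 (by rw [ht, hI0])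
      have hxJ : x J0 = -1 := by
        rw [hxdef]
        refine dif_neg ?_
        rintro ⟨t, ht⟩
        exact (emb_val hm hi1 hij hjm t).2.1 (by rw [ht, hJ0])
      rw [hΨx]
      exact ⟨hxI, hxJ, hvalid⟩
  have hncard : S.ncard = (combFinset q (m-2) (i-1)).card := by
    rw [← Set.ncard_image_of_injOn hinj, himg, Set.ncard_coe_finset]
  rw [hncard, comb_card (m-2) q (i-1) (by omega) (by omega)]
  have c3 : (m - 2) - (i - 1) = m - i - 1 := by omega
  have c1 : ((q - 2 * (m - 2) - 3 : ℕ) : ℤ) = (q : ℤ) - 2 * m + 1 := by omega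
  have c2 : ((q - 2 * (m - 2) - 2 : ℕ) : ℤ) = (q : ℤ) - 2 * m + 2 := by omega
  push_cast
  rw [c3, c1, c2]


end ShiB

/-- The number of points on the restriction of `B_m ∪ {x_j = -1}` to the flat
`{x_i - x_j = 0, x_j = -1}` avoiding all other hyperplanes
(indices `1 ≤ i < j ≤ m`, 1-indexed). -/
theorem shi_typeB_flat_xi_eq_xj_eq_neg_one (m i j : ℕ) (hm : 2 ≤ m)
    (hi1 : 1 ≤ i) (hij : i < j) (hjm : j ≤ m) :
    ∃ N : ℕ, 0 < N ∧ ∀ q : ℕ, N ≤ q →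
      ({x : Fin m → ZMod q |
          x ⟨i - 1, by omega⟩ = -1 ∧ x ⟨j - 1, by omega⟩ = -1 ∧
          (∀ s : Fin m, x s ≠ 0 ∧ x s ≠ 1) ∧
          (∀ s t : Fin m, s ≠ t →
            ¬((s = ⟨i - 1, by omega⟩ ∧ t = ⟨j - 1, by omega⟩) ∨
              (s = ⟨j - 1, by omega⟩ ∧ t = ⟨i - 1, by omega⟩)) → x s ≠ x t) ∧
          (∀ s t : Fin m, s < t →
            ¬(s = ⟨i - 1, by omega⟩ ∧ t = ⟨j - 1, by omega⟩) → x s ≠ x t + 1) ∧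
          (∀ s t : Fin m, s ≠ t → x s ≠ -x t ∧ x s ≠ -x t + 1)}.ncard : ℤ)
        = ((q : ℤ) - 2 * m + 1) ^ (m - i - 1) * ((q : ℤ) - 2 * m + 2) ^ (i - 1) := by
  refine ⟨2 * m + 5, by omega, fun q hq => ?_⟩
  exact ShiB.card_S m i j q hm hi1 hij hjm hq ⟨i - 1, by omega⟩ ⟨j - 1, by omega⟩ rfl rfl
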